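/- Let n ≥ 5 and let a ∈ Sym(n) be an odd permutation whose order is not a power of 2. Then there exists b ∈ Sym(n) such that ⟨a, b⟩ = Sym(n). -/

import Mathlib

open Equiv Equiv.Perm Subgroup Finset

/-- Core lemma: if `H` contains `c` and `b = swap z (c z) * r` where `r` is the cycle formed
from the elements of `R` (with `z, c z ∉ R`, `c (c z) ∈ R`, `R` of odd cardinality `≥ 3`),
then `H` contains `swap (c z) u` for every `u ∈ R ∪ {z, c z}`. -/
theorem star_core {n : ℕ} (H : Subgroup (Perm (Fin n))) (c : Perm (Fin n)) (z : Fin n)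
    (R : Finset (Fin n)) (hzR : z ∉ R) (hyR : c z ∉ R) (hvR : c (c z) ∈ R)
    (hodd : Odd R.card) (hcard3 : 3 ≤ R.card)
    (hcH : c ∈ H) (hbH : Equiv.swap z (c z) * R.toList.formPerm ∈ H) :
    ∀ u : Fin n, (u ∈ R ∨ u = z ∨ u = c z) → Equiv.swap (c z) u ∈ H := by
  classical
  set s : Perm (Fin n) := Equiv.swap z (c z) with hs
  set r : Perm (Fin n) := R.toList.formPerm with hr
  set b : Perm (Fin n) := s * r with hb
  have hnd : R.toList.Nodup := R.nodup_toList
  have hlen : R.toList.length = R.card := R.length_toList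
  have hlen2 : 2 ≤ R.toList.length := by omega
  have hne1 : ∀ x : Fin n, R.toList ≠ [x] := by
    intro x hx
    rw [hx] at hlen
    simp at hlen; omega
  have hsupp : r.support = R := by
    rw [hr, List.support_formPerm_of_nodup _ hnd hne1, Finset.toList_toFinset]
  have hcycle : r.IsCycle := List.isCycle_formPerm hnd hlen2
  have horder : orderOf r = R.card := by rw [hcycle.orderOf, hsupp]
  -- s and r commute (disjoint supports)
  have hdisj : Perm.Disjoint s r := by
    intro x
    by_cases hx : x ∈ R
    · left
      have h1 : x ≠ z := fun h => hzR (h ▸ hx)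
      have h2 : x ≠ c z := fun h => hyR (h ▸ hx)
      exact Equiv.swap_apply_of_ne_of_ne h1 h2
    · right
      have : x ∉ r.support := by rwa [hsupp]
      exact Equiv.Perm.notMem_support.mp this
  have hcomm : Commute s r := hdisj.commute
  have hb2 : b ^ 2 = r ^ 2 := by
    have hss : s * s = 1 := Equiv.swap_mul_self _ _
    calc b ^ 2 = s * r * (s * r) := sq b
    _ = s * (r * s) * r := by group
    _ = s * (s * r) * r := by rw [hcomm.eq]
    _ = (s * s) * (r * r) := by group
    _ = r ^ 2 := by rw [hss, one_mul, sq]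
  -- r ∈ H
  obtain ⟨m, hm⟩ := hodd
  have hrH : r ∈ H := by
    have : (b ^ 2) ^ (m + 1) ∈ H := pow_mem (pow_mem hbH 2) (m + 1)
    have heq : (b ^ 2) ^ (m + 1) = r := by
      rw [hb2, ← pow_mul]
      have : 2 * (m + 1) = R.card + 1 := by omega
      rw [this, pow_succ, ← horder, pow_orderOf_eq_one, one_mul]
    rwa [heq] at this
  have hsH : s ∈ H := by
    have : b * r⁻¹ ∈ H := mul_mem hbH (inv_mem hrH)
    rwa [hb, mul_inv_cancel_right] at this
  -- swap (c z) (c (c z)) ∈ H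
  have hyv : Equiv.swap (c z) (c (c z)) ∈ H := by
    have : c * s * c⁻¹ ∈ H := mul_mem (mul_mem hcH hsH) (inv_mem hcH)
    rwa [hs, ← Equiv.swap_apply_apply] at this
  -- star over R
  have hstarR : ∀ u ∈ R, Equiv.swap (c z) u ∈ H := by
    intro u hu
    have hv' : r (c (c z)) ≠ c (c z) := by
      rw [← Equiv.Perm.mem_support, hsupp]; exact hvR
    have hu' : r u ≠ u := by rw [← Equiv.Perm.mem_support, hsupp]; exact hu
    obtain ⟨k, hk⟩ := hcycle.exists_pow_eq hv' hu'
    have hy' : (r ^ k) (c z) = c z := by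
      have : c z ∉ (r ^ k).support := fun h => hyR (by
        have := Equiv.Perm.support_pow_le r k h
        rwa [hsupp] at this)
      exact Equiv.Perm.notMem_support.mp this
    have : (r ^ k) * Equiv.swap (c z) (c (c z)) * (r ^ k)⁻¹ ∈ H :=
      mul_mem (mul_mem (pow_mem hrH k) hyv) (inv_mem (pow_mem hrH k))
    rwa [← Equiv.swap_apply_apply, hy', hk] at this
  rintro u (hu | rfl | rfl)
  · exact hstarR u hu
  · rw [Equiv.swap_comm]; exact hsH
  · rw [Equiv.swap_self]; exact one_mem H

/-- If `H` contains `swap y u` for every `u`, then `H = ⊤`. -/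
theorem eq_top_of_star {n : ℕ} (H : Subgroup (Perm (Fin n))) (y : Fin n)
    (h : ∀ u : Fin n, Equiv.swap y u ∈ H) : H = ⊤ := by
  rw [eq_top_iff, ← Equiv.Perm.closure_isSwap, Subgroup.closure_le]
  rintro τ ⟨u, v, -, rfl⟩
  exact SubmonoidClass.swap_mem_trans H (Equiv.swap_comm y u ▸ h u) (h v)

/-- for `n ≥ 5`, every odd permutation in `Sym(n)` whose order is not a
power of `2` is part of a generating pair of `Sym(n)`. -/
theorem odd_perm_not_two_power_order_part_of_generating_pair (n : ℕ) (hn : 5 ≤ n)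
    (a : Equiv.Perm (Fin n))
    (hodd : Equiv.Perm.sign a = -1)
    (hord : ¬ ∃ m : ℕ, orderOf a = 2 ^ m) :
    ∃ b : Equiv.Perm (Fin n), Subgroup.closure {a, b} = ⊤ := by
  classical
  set o := orderOf a with ho_def
  have ho : o ≠ 0 := (orderOf_pos a).ne'
  -- find an odd prime p dividing o
  have hcompl : ordCompl[2] o ≠ 1 := by
    intro h
    apply hord
    refine ⟨o.factorization 2, ?_⟩
    have := Nat.ordProj_mul_ordCompl_eq_self o 2
    rw [h, mul_one] at this
    exact this.symm
  set p := (ordCompl[2] o).minFac with hp_def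
  have hp : p.Prime := Nat.minFac_prime hcompl
  have hpdvd : p ∣ o := (Nat.minFac_dvd _).trans (Nat.ordCompl_dvd o 2)
  have hp2 : p ≠ 2 := by
    intro h
    have hd : p ∣ ordCompl[2] o := Nat.minFac_dvd _
    rw [h] at hd
    exact Nat.not_dvd_ordCompl Nat.prime_two ho hd
  have hpodd : Odd p := hp.odd_of_ne_two hp2
  -- c has order p
  set c : Perm (Fin n) := a ^ (o / p) with hc_def
  have hcord : orderOf c = p := by
    rw [hc_def, orderOf_pow, ← ho_def, Nat.gcd_eq_right (Nat.div_dvd_of_dvd hpdvd),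
      Nat.div_div_self hpdvd ho]
  have hc1 : c ≠ 1 := by
    intro h
    rw [h, orderOf_one] at hcord
    exact hp.one_lt.ne' hcord.symm
  obtain ⟨z, hz⟩ : ∃ z : Fin n, c z ≠ z := by
    by_contra h
    push_neg at h
    exact hc1 (Equiv.ext fun x => h x)
  -- z, c z, c (c z) are pairwise distinct
  have hcp : c ^ p = 1 := by rw [← hcord]; exact pow_orderOf_eq_one c
  have hvz : c (c z) ≠ z := by
    intro h
    obtain ⟨t, ht⟩ := hpodd
    have hiter : ∀ k : ℕ, ((c ^ 2) ^ k) z = z := by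
      intro k
      induction k with
      | zero => simp
      | succ k ih =>
        rw [pow_succ', Equiv.Perm.mul_apply, ih, sq, Equiv.Perm.mul_apply, h]
    have hcz : c z = ((c ^ 2) ^ (t + 1)) z := by
      rw [← pow_mul]
      have h2t : 2 * (t + 1) = p + 1 := by omega
      rw [h2t, pow_succ, hcp, one_mul]
    rw [hcz, hiter] at hz
    exact hz rfl
  have hvy : c (c z) ≠ c z := fun h => hz (c.injective h)
  -- the set D = univ \ {z, c z}
  set D : Finset (Fin n) := Finset.univ \ {z, c z} with hD_def
  have hDcard : D.card = n - 2 := by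
    rw [hD_def, Finset.card_sdiff_of_subset (Finset.subset_univ _), Finset.card_univ, Fintype.card_fin]
    congr 1
    rw [Finset.card_insert_of_notMem (Finset.notMem_singleton.mpr (fun h => hz h.symm)), Finset.card_singleton]
  have hvD : c (c z) ∈ D := by
    simp only [hD_def, Finset.mem_sdiff, Finset.mem_univ, true_and, Finset.mem_insert,
      Finset.mem_singleton]
    push_neg
    exact ⟨hvz, hvy⟩
  have hzD : z ∉ D := by simp [hD_def]
  have hyD : c z ∉ D := by simp [hD_def]
  rcases Nat.even_or_odd n with hne | hno
  · -- n even : remove a point w moved by a, outside {z, c z, c (c z)}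
    obtain ⟨w, hwz, hwy, hwv, hwa⟩ :
        ∃ w : Fin n, w ≠ z ∧ w ≠ c z ∧ w ≠ c (c z) ∧ a w ≠ w := by
      by_contra h
      push_neg at h
      have hsupp : a.support ⊆ {z, c z, c (c z)} := by
        intro x hx
        rw [Equiv.Perm.mem_support] at hx
        simp only [Finset.mem_insert, Finset.mem_singleton]
        by_contra hx'
        push_neg at hx'
        exact hx (h x hx'.1 hx'.2.1 hx'.2.2)
      have hcard3 : a.support.card ≤ 3 := by
        calc a.support.card ≤ ({z, c z, c (c z)} : Finset (Fin n)).card :=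
              Finset.card_le_card hsupp
        _ ≤ 3 := (Finset.card_insert_le _ _).trans (by
              exact Nat.add_le_add_right ((Finset.card_insert_le _ _).trans (by simp)) 1)
      have ha1 : a ≠ 1 := by
        intro h1
        rw [h1] at hodd
        simp at hodd
      have hcard2 : 2 ≤ a.support.card := by
        rcases Nat.lt_or_ge a.support.card 2 with h2 | h2
        · interval_cases h : a.support.card
          · exact absurd (Equiv.Perm.card_support_eq_zero.mp h) ha1
          · exact absurd h (Equiv.Perm.card_support_ne_one a)
        · exact h2
      interval_cases h3 : a.support.card
      · -- swap: order 2
        obtain ⟨x, y, hxy, rfl⟩ := Equiv.Perm.card_support_eq_two.mp h3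
        apply hord
        refine ⟨1, ?_⟩
        rw [pow_one]
        exact orderOf_eq_prime (by rw [sq]; exact Equiv.swap_mul_self x y)
          (fun h1 => hxy (Equiv.swap_eq_one_iff.mp h1))
      · -- three-cycle: sign 1
        have := (card_support_eq_three_iff.mp h3).sign
        rw [this] at hodd
        exact absurd hodd (by decide)
    set R : Finset (Fin n) := D.erase w with hR_def
    have hwD : w ∈ D := by
      simp only [hD_def, Finset.mem_sdiff, Finset.mem_univ, true_and, Finset.mem_insert,
        Finset.mem_singleton]
      push_neg
      exact ⟨hwz, hwy⟩
    have hRcard : R.card = n - 3 := by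
      rw [hR_def, Finset.card_erase_of_mem hwD, hDcard]
      omega
    have hn6 : 6 ≤ n := by
      obtain ⟨t, ht⟩ := hne; omega
    have hRodd : Odd R.card := by
      rw [hRcard]; obtain ⟨t, ht⟩ := hne
      exact ⟨t - 2, by omega⟩
    have hR3 : 3 ≤ R.card := by omega
    have hzR : z ∉ R := fun h => hzD (Finset.erase_subset _ _ h)
    have hyR : c z ∉ R := fun h => hyD (Finset.erase_subset _ _ h)
    have hvR : c (c z) ∈ R := Finset.mem_erase.mpr ⟨fun h => hwv h.symm, hvD⟩
    refine ⟨Equiv.swap z (c z) * R.toList.formPerm, ?_⟩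
    set H := Subgroup.closure ({a, Equiv.swap z (c z) * R.toList.formPerm} :
      Set (Perm (Fin n))) with hH_def
    have haH : a ∈ H := Subgroup.subset_closure (Set.mem_insert _ _)
    have hbH : Equiv.swap z (c z) * R.toList.formPerm ∈ H :=
      Subgroup.subset_closure (Set.mem_insert_of_mem _ rfl)
    have hcH : c ∈ H := by rw [hc_def]; exact pow_mem haH _
    have hstar := star_core H c z R hzR hyR hvR hRodd hR3 hcH hbH
    have hstar' : ∀ u : Fin n, u ≠ w → Equiv.swap (c z) u ∈ H := by
      intro u hu
      apply hstar
      by_cases h1 : u = z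
      · right; left; exact h1
      by_cases h2 : u = c z
      · right; right; exact h2
      left
      refine Finset.mem_erase.mpr ⟨hu, ?_⟩
      simp only [hD_def, Finset.mem_sdiff, Finset.mem_univ, true_and, Finset.mem_insert,
        Finset.mem_singleton]
      push_neg
      exact ⟨h1, h2⟩
    -- connect w
    obtain ⟨u₀, hu₀w, hu₀aw⟩ : ∃ u₀ : Fin n, u₀ ≠ w ∧ u₀ ≠ a⁻¹ w := by
      by_contra h
      push_neg at h
      have : (Finset.univ : Finset (Fin n)) ⊆ {w, a⁻¹ w} := by
        intro x _
        by_cases hxw : x = w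
        · simp [hxw]
        · simp [h x hxw]
      have := Finset.card_le_card this
      rw [Finset.card_univ, Fintype.card_fin] at this
      have h2 : ({w, a⁻¹ w} : Finset (Fin n)).card ≤ 2 :=
        (Finset.card_insert_le _ _).trans (by simp)
      omega
    have haw : a⁻¹ w ≠ w := by
      intro h
      apply hwa
      conv_lhs => rw [← h]
      exact a.apply_symm_apply w
    have h1 : Equiv.swap (a⁻¹ w) u₀ ∈ H :=
      SubmonoidClass.swap_mem_trans H (Equiv.swap_comm (c z) (a⁻¹ w) ▸ hstar' (a⁻¹ w) haw)
        (hstar' u₀ hu₀w)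
    have h2 : Equiv.swap w (a u₀) ∈ H := by
      have : a * Equiv.swap (a⁻¹ w) u₀ * a⁻¹ ∈ H := mul_mem (mul_mem haH h1) (inv_mem haH)
      rwa [← Equiv.swap_apply_apply, Equiv.Perm.inv_def, Equiv.apply_symm_apply] at this
    have hau₀ : a u₀ ≠ w := by
      intro h
      exact hu₀aw (by rw [← h, Equiv.Perm.inv_def, Equiv.symm_apply_apply])
    have hyw : Equiv.swap (c z) w ∈ H :=
      SubmonoidClass.swap_mem_trans H (hstar' (a u₀) hau₀)
        (Equiv.swap_comm w (a u₀) ▸ h2)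
    apply eq_top_of_star H (c z)
    intro u
    by_cases hu : u = w
    · rw [hu]; exact hyw
    · exact hstar' u hu
  · -- n odd : take R = D
    have hRodd : Odd D.card := by
      rw [hDcard]; obtain ⟨t, ht⟩ := hno
      exact ⟨t - 1, by omega⟩
    have hR3 : 3 ≤ D.card := by omega
    refine ⟨Equiv.swap z (c z) * D.toList.formPerm, ?_⟩
    set H := Subgroup.closure ({a, Equiv.swap z (c z) * D.toList.formPerm} :
      Set (Perm (Fin n))) with hH_def
    have haH : a ∈ H := Subgroup.subset_closure (Set.mem_insert _ _)
    have hbH : Equiv.swap z (c z) * D.toList.formPerm ∈ H :=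
      Subgroup.subset_closure (Set.mem_insert_of_mem _ rfl)
    have hcH : c ∈ H := by rw [hc_def]; exact pow_mem haH _
    have hstar := star_core H c z D hzD hyD hvD hRodd hR3 hcH hbH
    apply eq_top_of_star H (c z)
    intro u
    apply hstar
    by_cases h1 : u = z
    · right; left; exact h1
    by_cases h2 : u = c z
    · right; right; exact h2
    left
    simp only [hD_def, Finset.mem_sdiff, Finset.mem_univ, true_and, Finset.mem_insert,
      Finset.mem_singleton]
    push_neg
    exact ⟨h1, h2⟩
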